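/- The tempered softmax is invariant along the normal direction: if θ̌ = log_t(p̃/λ̃) for a positive vector p̃ and positive scalar λ̃, then for any r ∈ ℝ, applying the tempered softmax f*(θ)_i = exp_t(θ_i)/(Σ_j exp_t(θ_j)^(1/t*))^(t*) to θ̌ + r·p̃^(1-t) gives the same result as applying it to θ̌, provided all exp_t values remain positive. -/

import Mathlib

noncomputable def tlog (t x : ℝ) : ℝ := (x ^ (1 - t) - 1) / (1 - t)

noncomputable def texp (t y : ℝ) : ℝ := (1 + (1 - t) * y) ^ (1 / (1 - t))

noncomputable def tsoftmax {ι : Type*} [Fintype ι] (t tstar : ℝ) (θ : ι → ℝ) (i : ι) : ℝ :=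
  texp t (θ i) / (∑ j, (texp t (θ j)) ^ (1 / tstar)) ^ tstar

lemma tsoftmax_scale {ι : Type*} [Fintype ι] (t : ℝ) (ht : t < 2)
    (q : ι → ℝ) (hq : ∀ i, 0 < q i) (K : ℝ) (hK : 0 < K)
    (θ : ι → ℝ) (hθ : ∀ j, texp t (θ j) = q j * K) (i : ι) :
    tsoftmax t (1 / (2 - t)) θ i = q i / (∑ j, q j ^ (2 - t)) ^ (1 / (2 - t)) := by
  have h2t : (2 : ℝ) - t ≠ 0 := by linarith
  unfold tsoftmax
  rw [one_div_one_div]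
  have hsum : ∑ j, (texp t (θ j)) ^ (2 - t) = K ^ (2 - t) * ∑ j, q j ^ (2 - t) := by
    rw [Finset.mul_sum]
    refine Finset.sum_congr rfl fun j _ => ?_
    rw [hθ j, Real.mul_rpow (hq j).le hK.le, mul_comm]
  rw [hsum, hθ i,
    Real.mul_rpow (by positivity) (Finset.sum_nonneg fun j _ => (Real.rpow_pos_of_pos (hq j) _).le),
    ← Real.rpow_mul hK.le, mul_one_div, div_self h2t, Real.rpow_one]
  rw [mul_comm (q i) K, mul_div_mul_left _ _ hK.ne']

theorem tsoftmax_invariant {ι : Type*} [Fintype ι] (t : ℝ) (ht : t < 2) (ht1 : t ≠ 1)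
    (p : ι → ℝ) (hp : ∀ i, 0 < p i) (lam : ℝ) (hlam : 0 < lam) (r : ℝ)
    (hpos : ∀ i, 0 < 1 + (1 - t) * (tlog t (p i / lam) + r * (p i) ^ (1 - t))) :
    (fun i => tsoftmax t (1 / (2 - t)) (fun j => tlog t (p j / lam) + r * (p j) ^ (1 - t)) i) =
      fun i => tsoftmax t (1 / (2 - t)) (fun j => tlog t (p j / lam)) i := by
  have h1t : (1 : ℝ) - t ≠ 0 := by
    intro h; apply ht1; linarith
  have key : ∀ j, 1 + (1 - t) * tlog t (p j / lam) = (p j / lam) ^ (1 - t) := by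
    intro j; unfold tlog; field_simp; ring
  have hdiv : ∀ j, (p j / lam) ^ (1 - t) = p j ^ (1 - t) * lam ^ (t - 1) := by
    intro j
    rw [Real.div_rpow (hp j).le hlam.le, div_eq_mul_inv, ← Real.rpow_neg hlam.le]
    ring_nf
  have key2 : ∀ j, 1 + (1 - t) * (tlog t (p j / lam) + r * (p j) ^ (1 - t))
      = p j ^ (1 - t) * (lam ^ (t - 1) + (1 - t) * r) := by
    intro j
    have := key j
    rw [hdiv j] at this
    nlinarith [this]
  funext i
  set c : ℝ := lam ^ (t - 1) + (1 - t) * r with hc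
  have hcpos : 0 < c := by
    have h := hpos i
    rw [key2 i] at h
    have hppos : 0 < p i ^ (1 - t) := Real.rpow_pos_of_pos (hp i) _
    nlinarith
  have htexp1 : ∀ j, texp t (tlog t (p j / lam) + r * (p j) ^ (1 - t))
      = p j * c ^ (1 / (1 - t)) := by
    intro j
    unfold texp
    rw [key2 j, Real.mul_rpow (Real.rpow_pos_of_pos (hp j) _).le hcpos.le,
      ← Real.rpow_mul (hp j).le, mul_one_div, div_self h1t, Real.rpow_one]
  have htexp2 : ∀ j, texp t (tlog t (p j / lam)) = p j * lam⁻¹ := by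
    intro j
    unfold texp
    rw [key j, ← Real.rpow_mul (div_nonneg (hp j).le hlam.le), mul_one_div, div_self h1t,
      Real.rpow_one, div_eq_mul_inv]
  rw [tsoftmax_scale t ht p hp _ (Real.rpow_pos_of_pos hcpos _) _ htexp1 i,
    tsoftmax_scale t ht p hp _ (inv_pos.mpr hlam) _ htexp2 i]
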